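/- Over {a<b<c}, let w = u·c·v where u, v ∈ {a,b}* and the projection of w onto {a,c} is a^m c a^n with m, n ≥ 1 (so w contains exactly one c). Suppose w is not M-equivalent to any word containing ac or ca as a factor. Then for every w' M-equivalent to w, the projection π_{a,c}(w') equals π_{a,c}(w). -/

import Mathlib

open List

/-- Number of occurrences of `v` as a scattered subsequence of `w`. -/
def scount {α : Type*} [DecidableEq α] (w v : List α) : ℕ := w.sublists.count v

/-- The ternary ordered alphabet {a < b < c}. -/
inductive ABC | a | b | c
deriving DecidableEq

open ABC

/-- M-equivalence over the ordered alphabet {a < b < c}. -/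
def MEq3 (w w' : List ABC) : Prop :=
  scount w [a] = scount w' [a] ∧ scount w [b] = scount w' [b] ∧
  scount w [c] = scount w' [c] ∧ scount w [a, b] = scount w' [a, b] ∧
  scount w [b, c] = scount w' [b, c] ∧ scount w [a, b, c] = scount w' [a, b, c]

/-- Projection onto {a, c}: erase all b's. -/
def projAC (w : List ABC) : List ABC := w.filter (· ≠ b)

abbrev A (k : ℕ) : List ABC := List.replicate k a
abbrev B (k : ℕ) : List ABC := List.replicate k b
abbrev C (k : ℕ) : List ABC := List.replicate k c
variable {α : Type*} [DecidableEq α]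

local notation "dcount" => @count (List _) instBEqOfDecidableEq

lemma count_beq_irrel (v : List α) (l : List (List α)) :
    @count (List α) instBEq v l = dcount v l := by
  induction l with
  | nil => rfl
  | cons h t ih => simp only [count_cons, ih, beq_iff_eq]

lemma scount_sublists' (w v : List α) :
    scount w v = dcount v w.sublists' := by
  unfold scount
  rw [count_beq_irrel]
  exact @Perm.count_eq _ instBEqOfDecidableEq _ _ (sublists_perm_sublists' w) v

lemma scount_nil (v : List α) : scount [] v = if v = [] then 1 else 0 := by
  unfold scount
  rw [sublists_nil]
  split <;> simp_all [count_singleton', count_eq_zero]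

lemma dcount_cons (v s : List α) (L : List (List α)) :
    dcount v (s :: L) = dcount v L + if v = s then 1 else 0 := by
  simp only [count_cons, beq_iff_eq]
  by_cases h : v = s
  · simp [h]
  · simp [h, show ¬ s = v from fun hh => h hh.symm]

lemma count_map_cons (x : α) (L : List (List α)) (v : List α) :
    dcount v (L.map (x :: ·)) =
      (match v with
       | [] => 0
       | y :: t => if y = x then dcount t L else 0) := by
  induction L with
  | nil => cases v <;> simp
  | cons s L ih =>
    rw [map_cons, dcount_cons, ih]
    cases v with
    | nil => simp
    | cons y t =>
      by_cases h : y = x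
      · subst h
        simp [dcount_cons, List.cons.injEq]
      · simp [h, List.cons.injEq]

lemma scount_cons (x : α) (w : List α) (v : List α) :
    scount (x :: w) v = scount w v +
      (match v with
       | [] => 0
       | y :: t => if y = x then scount w t else 0) := by
  rw [scount_sublists', scount_sublists', sublists'_cons, @count_append (List α) instBEqOfDecidableEq, count_map_cons]
  cases v with
  | nil => rfl
  | cons y t => by_cases h : y = x <;> simp [h, scount_sublists']

lemma scount_nil_right (w : List α) : scount w [] = 1 := by
  induction w with
  | nil => simp [scount_nil]
  | cons x w ih => rw [scount_cons]; simpa using ih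

lemma scount_singleton (w : List α) (x : α) : scount w [x] = count x w := by
  induction w with
  | nil => simp [scount_nil]
  | cons z w ih =>
    rw [scount_cons, count_cons]
    simp only [beq_iff_eq, ih, scount_nil_right]
    by_cases h : x = z <;> simp [h, eq_comm]

lemma scount_append1 (u w : List α) (x : α) :
    scount (u ++ w) [x] = scount u [x] + scount w [x] := by
  simp [scount_singleton, count_append]

lemma scount_append2 (u w : List α) (x y : α) :
    scount (u ++ w) [x, y] =
      scount u [x, y] + scount u [x] * scount w [y] + scount w [x, y] := by
  induction u with
  | nil => simp [scount_nil]
  | cons z u ih =>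
    simp only [cons_append, scount_cons, ih, scount_append1]
    by_cases h : x = z <;> simp [h, scount_nil_right] <;> ring

lemma scount_append3 (u w : List α) (x y z : α) :
    scount (u ++ w) [x, y, z] =
      scount u [x, y, z] + scount u [x, y] * scount w [z]
        + scount u [x] * scount w [y, z] + scount w [x, y, z] := by
  induction u with
  | nil => simp [scount_nil]
  | cons q u ih =>
    simp only [cons_append, scount_cons, ih, scount_append1, scount_append2]
    by_cases h : x = q <;> simp [h, scount_nil_right] <;> ring

lemma scount_eq_zero_of_not_mem {w v : List α} {x : α} (hxv : x ∈ v) (hxw : x ∉ w) :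
    scount w v = 0 := by
  unfold scount
  rw [count_eq_zero]
  intro hmem
  exact hxw ((mem_sublists.mp hmem).subset hxv)

lemma scount_pair_le (w : List α) (x y : α) :
    scount w [x, y] ≤ count x w * count y w := by
  induction w with
  | nil => simp [scount_nil]
  | cons z w ih =>
    rw [scount_cons]
    simp only [count_cons, beq_iff_eq, scount_singleton]
    rcases eq_or_ne z x with rfl | h1
    · rcases eq_or_ne z y with rfl | h2
      · simp only [if_pos trivial, if_true]
        nlinarith [ih]
      · simp [h2, Ne.symm h2]
        nlinarith [ih]
    · rcases eq_or_ne z y with rfl | h2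
      · simp [h1, Ne.symm h1]
        nlinarith [ih]
      · simp [h1, h2, Ne.symm h1, Ne.symm h2]
        nlinarith [ih]

namespace ABCfacts
open ABC

lemma sc_c_of_not_mem {P : List ABC} (hP : c ∉ P) : scount P [c] = 0 :=
  scount_eq_zero_of_not_mem (by simp) hP
lemma sc_bc_of_not_mem {P : List ABC} (hP : c ∉ P) : scount P [b, c] = 0 :=
  scount_eq_zero_of_not_mem (by simp) hP
lemma sc_abc_of_not_mem {P : List ABC} (hP : c ∉ P) : scount P [a, b, c] = 0 :=
  scount_eq_zero_of_not_mem (by simp) hP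

lemma sc_single (w : List ABC) (x : ABC) : scount w [x] = count x w := scount_singleton w x

lemma stats_a (P S : List ABC) :
    scount (P ++ [c] ++ S) [a] = count a P + count a S := by
  simp [scount_singleton, count_append]

lemma stats_b (P S : List ABC) :
    scount (P ++ [c] ++ S) [b] = count b P + count b S := by
  simp [scount_singleton, count_append]

lemma stats_c (P S : List ABC) (hP : c ∉ P) (hS : c ∉ S) :
    scount (P ++ [c] ++ S) [c] = 1 := by
  simp [scount_singleton, count_append, count_eq_zero_of_not_mem hP,
    count_eq_zero_of_not_mem hS]

lemma stats_ab (P S : List ABC) :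
    scount (P ++ [c] ++ S) [a, b] =
      scount P [a, b] + count a P * count b S + scount S [a, b] := by
  rw [append_assoc, scount_append2, scount_append2]
  have h1 : scount [c] [a, b] = 0 := by decide
  have h2 : scount ([c] : List ABC) [a] = 0 := by decide
  have h3 : scount ([c] : List ABC) [b] = 0 := by decide
  simp [h1, h2, h3, scount_append1, scount_singleton]

lemma stats_bc (P S : List ABC) (hP : c ∉ P) (hS : c ∉ S) :
    scount (P ++ [c] ++ S) [b, c] = count b P := by
  rw [append_assoc, scount_append2, scount_append2]
  have h1 : scount [c] [b, c] = 0 := by decide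
  have h2 : scount ([c] : List ABC) [b] = 0 := by decide
  have h3 : scount ([c] : List ABC) [c] = 1 := by decide
  simp [h1, h2, h3, sc_bc_of_not_mem hP, sc_bc_of_not_mem hS, scount_singleton,
    count_eq_zero_of_not_mem hS]

lemma stats_abc (P S : List ABC) (hP : c ∉ P) (hS : c ∉ S) :
    scount (P ++ [c] ++ S) [a, b, c] = scount P [a, b] := by
  rw [append_assoc, scount_append3, scount_append3]
  have h1 : scount [c] [a, b, c] = 0 := by decide
  have h2 : scount ([c] : List ABC) [a, b] = 0 := by decide
  have h3 : scount ([c] : List ABC) [a] = 0 := by decide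
  have h4 : scount ([c] : List ABC) [c] = 1 := by decide
  have h5 : scount ([c] : List ABC) [b, c] = 0 := by decide
  have h6 : scount (c :: S) [b, c] = 0 := by
    rw [show (c :: S) = [c] ++ S from rfl, scount_append2]
    simp [h5, scount_singleton, count_eq_zero_of_not_mem hS, sc_bc_of_not_mem hS]
  simp [h6, h1, h2, h3, h4, h5, sc_abc_of_not_mem hP, sc_abc_of_not_mem hS,
    sc_bc_of_not_mem hS, sc_c_of_not_mem hS, scount_append2, scount_append1,
    scount_singleton, count_eq_zero_of_not_mem hS]

lemma MEq3_blocks {P S P' S' : List ABC} (hP : c ∉ P) (hS : c ∉ S)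
    (hP' : c ∉ P') (hS' : c ∉ S')
    (h1 : count a P' = count a P) (h2 : count b P' = count b P)
    (h3 : scount P' [a, b] = scount P [a, b])
    (h4 : count a S' = count a S) (h5 : count b S' = count b S)
    (h6 : scount S' [a, b] = scount S [a, b]) :
    MEq3 (P ++ [c] ++ S) (P' ++ [c] ++ S') := by
  refine ⟨?_, ?_, ?_, ?_, ?_, ?_⟩
  · rw [stats_a, stats_a, h1, h4]
  · rw [stats_b, stats_b, h2, h5]
  · rw [stats_c _ _ hP hS, stats_c _ _ hP' hS']
  · rw [stats_ab, stats_ab, h1, h3, h5, h6]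
  · rw [stats_bc _ _ hP hS, stats_bc _ _ hP' hS', h2]
  · rw [stats_abc _ _ hP hS, stats_abc _ _ hP' hS', h3]

end ABCfacts

namespace ABCfacts
open ABC

lemma not_mem_A {x : ABC} (hx : x ≠ a) (k : ℕ) : x ∉ A k := by
  simp [mem_replicate, hx]
lemma not_mem_B {x : ABC} (hx : x ≠ b) (k : ℕ) : x ∉ B k := by
  simp [mem_replicate, hx]

lemma sab_A (k : ℕ) : scount (A k) [a, b] = 0 :=
  scount_eq_zero_of_not_mem (show b ∈ [a,b] by simp) (not_mem_A (by decide) k)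
lemma sab_B (k : ℕ) : scount (B k) [a, b] = 0 :=
  scount_eq_zero_of_not_mem (show a ∈ [a,b] by simp) (not_mem_B (by decide) k)

lemma exists_word (al be k : ℕ) (hk : k ≤ al * be) :
    ∃ p : List ABC, c ∉ p ∧ count a p = al ∧ count b p = be ∧
      scount p [a, b] = k := by
  rcases Nat.eq_zero_or_pos be with hbe | hbe
  · subst hbe
    have hk0 : k = 0 := by simpa using hk
    subst hk0
    exact ⟨A al, not_mem_A (by decide) al, by simp [count_replicate],
      by simp [count_replicate], sab_A al⟩
  · set q := k / be with hq
    set r := k % be with hr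
    have hrlt : r < be := Nat.mod_lt _ hbe
    have hkqr : q * be + r = k := by rw [hq, hr, Nat.mul_comm]; exact Nat.div_add_mod k be
    have hqe : q + (if r = 0 then 0 else 1) ≤ al := by
      by_cases h0 : r = 0
      · simp only [h0, if_true, Nat.add_zero]
        by_contra hcon
        have h1 : (al + 1) * be ≤ q * be := Nat.mul_le_mul_right be (by omega)
        have h2 : (al + 1) * be = al * be + be := by ring
        omega
      · simp only [h0, if_false]
        have hklt : k < al * be := by
          rcases Nat.lt_or_ge k (al * be) with h | h
          · exact h
          · exfalso; have : k = al * be := le_antisymm hk h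
            apply h0; rw [hr, this]; exact Nat.mul_mod_left al be
        by_contra hcon
        have h1 : al * be ≤ q * be := Nat.mul_le_mul_right be (by omega)
        omega
    set e := (if r = 0 then 0 else 1) with he
    refine ⟨A q ++ B (be - r) ++ A e ++ B r ++ A (al - q - e),
      ?_, ?_, ?_, ?_⟩
    · simp only [mem_append]
      push_neg
      exact ⟨⟨⟨⟨not_mem_A (by decide) _, not_mem_B (by decide) _⟩,
        not_mem_A (by decide) _⟩, not_mem_B (by decide) _⟩, not_mem_A (by decide) _⟩
    · simp [count_append, count_replicate]
      omega
    · simp [count_append, count_replicate]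
      omega
    · simp only [scount_append2, scount_singleton, count_append, count_replicate,
        sab_A, sab_B]
      simp [count_replicate]
      have her : e * r = r := by
        rcases Nat.eq_zero_or_pos r with h0 | h0
        · simp [h0]
        · have he1 : e = 1 := by rw [he, if_neg (by omega)]
          rw [he1, one_mul]
      have hd : be - r + r = be := by omega
      have key : q * (be - r) + (q + e) * r = k := by
        calc q * (be - r) + (q + e) * r
            = q * ((be - r) + r) + e * r := by ring
          _ = q * be + e * r := by rw [hd]
          _ = k := by rw [her]; omega
      omega

end ABCfacts

namespace ABCfacts
open ABC

lemma split_of_count_one {w : List ABC} (h : count c w = 1) :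
    ∃ P S, w = P ++ [c] ++ S ∧ c ∉ P ∧ c ∉ S := by
  induction w with
  | nil => simp at h
  | cons x t ih =>
    by_cases hx : x = c
    · subst hx
      have h0 : count c t = 0 := by
        rw [count_cons] at h; simp at h; omega
      exact ⟨[], t, by simp, by simp, count_eq_zero.mp h0⟩
    · have h1 : count c t = 1 := by
        rw [count_cons] at h
        simpa [hx] using h
      obtain ⟨P, S, heq, hP, hS⟩ := ih h1
      exact ⟨x :: P, S, by simp [heq], by
        simp only [mem_cons, not_or]
        exact ⟨fun hh => hx hh.symm, hP⟩, hS⟩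

lemma split_unique {P P' S S' : List ABC} (hP : c ∉ P) (hP' : c ∉ P')
    (h : P ++ [c] ++ S = P' ++ [c] ++ S') : P = P' ∧ S = S' := by
  induction P generalizing P' with
  | nil =>
    cases P' with
    | nil => simpa using h
    | cons y t =>
      exfalso
      simp only [nil_append, cons_append, cons.injEq] at h
      exact hP' (by simp [← h.1])
  | cons x P ih =>
    cases P' with
    | nil =>
      exfalso
      simp only [nil_append, cons_append, cons.injEq] at h
      exact hP (by simp [h.1])
    | cons y t =>
      simp only [cons_append, cons.injEq] at h
      obtain ⟨rfl, h2⟩ := h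
      have := ih (fun hh => hP (mem_cons_of_mem _ hh))
        (fun hh => hP' (mem_cons_of_mem _ hh)) h2
      exact ⟨by rw [this.1], this.2⟩

lemma projAC_no_c {P : List ABC} (hP : c ∉ P) : projAC P = A (count a P) := by
  induction P with
  | nil => simp [projAC]
  | cons x t ih =>
    have hxt : c ∉ t := fun hh => hP (mem_cons_of_mem _ hh)
    have iht := ih hxt
    cases x with
    | a =>
      have h1 : projAC (a :: t) = a :: projAC t := by simp [projAC]
      have h2 : count a (a :: t) = count a t + 1 := by simp [count_cons]
      rw [h1, iht, h2]
      rfl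
    | b =>
      have h1 : projAC (b :: t) = projAC t := by simp [projAC]
      have h2 : count a (b :: t) = count a t := by simp [count_cons]
      rw [h1, iht, h2]
    | c => exact absurd (by simp) hP

lemma projAC_split (P S : List ABC) :
    projAC (P ++ [c] ++ S) = projAC P ++ [c] ++ projAC S := by
  simp [projAC, filter_append]

end ABCfacts

open ABCfacts


theorem stmt_10 (u v : List ABC)
    (hu : ∀ x ∈ u, x = a ∨ x = b) (hv : ∀ x ∈ v, x = a ∨ x = b)
    (m n : ℕ) (hm : 1 ≤ m) (hn : 1 ≤ n)
    (hproj : projAC (u ++ [c] ++ v) = A m ++ [c] ++ A n)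
    (hnd : ¬ ∃ z : List ABC, MEq3 (u ++ [c] ++ v) z ∧
      ([a, c] <:+: z ∨ [c, a] <:+: z)) :
    ∀ w' : List ABC, MEq3 (u ++ [c] ++ v) w' →
      projAC w' = projAC (u ++ [c] ++ v) := by
  intro w' hw'
  have hcu : c ∉ u := fun hmem => by
    rcases hu c hmem with h | h <;> exact absurd h (by decide)
  have hcv : c ∉ v := fun hmem => by
    rcases hv c hmem with h | h <;> exact absurd h (by decide)
  -- identify m and n with letter counts
  have hsplit := projAC_split u v
  rw [hproj, projAC_no_c hcu, projAC_no_c hcv] at hsplit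
  have huniq := split_unique (not_mem_A (by decide) m)
    (not_mem_A (by decide) (count a u)) hsplit
  have hmu : count a u = m := by
    have := congrArg length huniq.1
    simpa using this.symm
  have hnv : count a v = n := by
    have := congrArg length huniq.2
    simpa using this.symm
  -- fact 1 : (m-1) * count b u < scount u [a,b]
  have fact1 : (m - 1) * count b u < scount u [a, b] := by
    by_contra hcon
    push_neg at hcon
    obtain ⟨p, hpc, hpa, hpb, hpab⟩ :=
      exists_word (m - 1) (count b u) (scount u [a, b]) hcon
    apply hnd
    refine ⟨(p ++ [a]) ++ [c] ++ v, ?_, Or.inl ⟨p, v, by simp⟩⟩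
    refine MEq3_blocks hcu hcv ?_ hcv ?_ ?_ ?_ rfl rfl rfl
    · simp only [mem_append, not_or]
      exact ⟨hpc, by decide⟩
    · rw [count_append, hpa, hmu]
      simp [count_cons]
      omega
    · rw [count_append, hpb]
      simp [count_cons]
    · rw [scount_append2, hpab]
      have h1 : scount [a] [a, b] = 0 := by decide
      have h2 : scount ([a] : List ABC) [b] = 0 := by decide
      rw [h1, h2]
      simp
  -- fact 2 : scount v [a,b] < count b v
  have fact2 : scount v [a, b] < count b v := by
    by_contra hcon
    push_neg at hcon
    have hb1 : scount v [a, b] ≤ count a v * count b v := scount_pair_le v a b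
    rw [hnv] at hb1
    have hk : scount v [a, b] - count b v ≤ (n - 1) * count b v := by
      have h3 : (n - 1) * count b v = n * count b v - count b v := Nat.sub_one_mul n (count b v)
      omega
    obtain ⟨s, hsc, hsa, hsb, hsab⟩ :=
      exists_word (n - 1) (count b v) (scount v [a, b] - count b v) hk
    apply hnd
    refine ⟨u ++ [c] ++ ([a] ++ s), ?_, Or.inr ⟨u, s, by simp⟩⟩
    refine MEq3_blocks hcu hcv hcu ?_ rfl rfl rfl ?_ ?_ ?_
    · simp only [mem_append, not_or]
      exact ⟨by decide, hsc⟩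
    · rw [count_append, hsa, hnv, show count a [a] = 1 by decide]
      omega
    · rw [count_append, hsb, show count b [a] = 0 by decide]
      omega
    · rw [scount_append2, hsab, show scount [a] [a, b] = 0 by decide,
        scount_singleton, show count a [a] = 1 by decide, scount_singleton, hsb]
      omega
  -- decompose w'
  have hc1 : count c w' = 1 := by
    have h := hw'.2.2.1
    rw [stats_c u v hcu hcv] at h
    rw [← scount_singleton]
    exact h.symm
  obtain ⟨P, S, rfl, hcP, hcS⟩ := split_of_count_one hc1
  obtain ⟨e1, e2, e3, e4, e5, e6⟩ := hw'
  rw [stats_a u v, stats_a P S] at e1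
  rw [stats_b u v, stats_b P S] at e2
  rw [stats_ab u v, stats_ab P S] at e4
  rw [stats_bc u v hcu hcv, stats_bc P S hcP hcS] at e5
  rw [stats_abc u v hcu hcv, stats_abc P S hcP hcS] at e6
  have hbS : count b S = count b v := by omega
  have hm' : count a P = m := by
    rcases lt_trichotomy (count a P) m with hlt | heq | hgt
    · exfalso
      have h1 : scount P [a, b] ≤ count a P * count b P := scount_pair_le P a b
      have h2 : count a P * count b P ≤ (m - 1) * count b P :=
        Nat.mul_le_mul_right _ (by omega)
      rw [e5] at fact1
      omega
    · exact heq
    · exfalso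
      rw [hmu, hbS] at e4
      have h2 : (m + 1) * count b v ≤ count a P * count b v :=
        Nat.mul_le_mul_right _ (by omega)
      have h3 : (m + 1) * count b v = m * count b v + count b v := by ring
      omega
  have hn' : count a S = n := by omega
  rw [projAC_split, projAC_split, projAC_no_c hcP, projAC_no_c hcS,
    projAC_no_c hcu, projAC_no_c hcv, hmu, hnv, hm', hn']
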